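/- Fix an integer j₀ ≥ 2, let C = { Σ_{i∈F} ε_i e_i : F ⊂ ℕ finite, card F ≤ n_{j₀−1}, ε_i ∈ {−1,1} }, and let D' be the smallest subset of c₀₀ containing C and closed under the operations: for every j ≥ 1 and every f_1 < f_2 < ⋯ < f_d in D' with d ≤ 5·n_j, the element (1/m_j)(f_1 + ⋯ + f_d) belongs to D'. Then for every f ∈ D' and every choice of natural numbers k_1 < k_2 < ⋯ < k_{n_{j₀}}, one has |f( (1/n_{j₀}) Σ_{l=1}^{n_{j₀}} e_{k_l} )| ≤ 1/m_{j₀}. -/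

import Mathlib

noncomputable section

/-- The sequence `m_j`: `m 1 = 2`, `m (j+1) = (m j)^5`, i.e. `m j = 2 ^ 5 ^ (j-1)`. -/
def mseq (j : ℕ) : ℕ := 2 ^ 5 ^ (j - 1)

/-- The sequence `n_j`: `n 1 = 4` and `n (j+1) = (5 n_j) ^ (3 · 5^j)`. -/
def nseq : ℕ → ℕ
  | 0 => 1
  | 1 => 4
  | (j + 2) => (5 * nseq (j + 1)) ^ (3 * 5 ^ (j + 1))

/-- `f < g` for finitely supported functions: every element of the support of `f` is
less than every element of the support of `g`. -/
def BlockLt (f g : ℕ →₀ ℝ) : Prop :=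
  ∀ a ∈ f.support, ∀ b ∈ g.support, a < b

/-- The action of `f ∈ c₀₀` on `x ∈ c₀₀`: `f(x) = ∑ k, f k * x k`. -/
def fapply (f x : ℕ →₀ ℝ) : ℝ := x.sum fun i v => f i * v

/-- The smallest subset `D'` of `c₀₀` containing the set
`C = {∑_{i ∈ F} ±e_i : card F ≤ n_{j₀-1}}` and closed under the
`(𝓐_{5 n_j}, 1/m_j)` operations for all `j ≥ 1`. -/
inductive Dset (j₀ : ℕ) : (ℕ →₀ ℝ) → Prop
  | base (h : ℕ →₀ ℝ) (hcard : h.support.card ≤ nseq (j₀ - 1))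
      (hval : ∀ k ∈ h.support, h k = 1 ∨ h k = -1) : Dset j₀ h
  | op (j d : ℕ) (hj : 1 ≤ j) (hd : d ≤ 5 * nseq j) (f : Fin d → (ℕ →₀ ℝ))
      (hmem : ∀ i, Dset j₀ (f i))
      (hblock : ∀ i i' : Fin d, i < i' → BlockLt (f i) (f i')) :
      Dset j₀ ((mseq j : ℝ)⁻¹ • ∑ i, f i)

/-! ### Auxiliary lemmas for Statement 15 -/

lemma nseq_pos : ∀ j, 0 < nseq j
  | 0 => one_pos
  | 1 => by norm_num [nseq]
  | (j + 2) => by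
      have h := nseq_pos (j + 1)
      simp only [nseq]
      exact pow_pos (by omega) _

lemma nseq_le_succ (j : ℕ) : nseq j ≤ nseq (j + 1) := by
  match j with
  | 0 => norm_num [nseq]
  | (j + 1) =>
      show nseq (j + 1) ≤ (5 * nseq (j + 1)) ^ (3 * 5 ^ (j + 1))
      calc nseq (j + 1) ≤ 5 * nseq (j + 1) := by omega
        _ ≤ (5 * nseq (j + 1)) ^ (3 * 5 ^ (j + 1)) := Nat.le_self_pow (by positivity) _

lemma nseq_mono : Monotone nseq := monotone_nat_of_le_succ nseq_le_succ

lemma mseq_cast (j : ℕ) : (mseq j : ℝ) = (2 : ℝ) ^ 5 ^ (j - 1) := by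
  simp [mseq]

lemma one_le_mseq (j : ℕ) : (1 : ℝ) ≤ (mseq j : ℝ) := by
  rw [mseq_cast]; exact one_le_pow₀ (by norm_num)

lemma support_disjoint {d : ℕ} (g : Fin d → (ℕ →₀ ℝ))
    (hblock : ∀ i i' : Fin d, i < i' → BlockLt (g i) (g i')) :
    ∀ i i' : Fin d, i ≠ i' → Disjoint (g i).support (g i').support := by
  intro i i' hne
  rw [Finset.disjoint_left]
  intro a ha ha'
  rcases lt_or_gt_of_ne hne with h | h
  · exact lt_irrefl a (hblock i i' h a ha a ha')
  · exact lt_irrefl a (hblock i' i h a ha' a ha)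

lemma Dset.abs_le_one {j₀ : ℕ} {f : ℕ →₀ ℝ} (hf : Dset j₀ f) (x : ℕ) : |f x| ≤ 1 := by
  induction hf with
  | base h hcard hval =>
      by_cases hx : x ∈ h.support
      · rcases hval x hx with h1 | h1 <;> simp [h1]
      · simp [Finsupp.notMem_support_iff.mp hx]
  | op j d hj hd g hmem hblock ih =>
      have hsum : |(∑ i, g i) x| ≤ 1 := by
        rw [Finsupp.finset_sum_apply]
        by_cases hx : ∃ i, g i x ≠ 0
        · obtain ⟨i₀, hi₀⟩ := hx
          have hz : ∀ i ∈ Finset.univ, i ≠ i₀ → g i x = 0 := by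
            intro i _ hne
            by_contra hgx
            have hd1 := support_disjoint g hblock i i₀ hne
            rw [Finset.disjoint_left] at hd1
            exact hd1 (Finsupp.mem_support_iff.mpr hgx) (Finsupp.mem_support_iff.mpr hi₀)
          rw [Finset.sum_eq_single i₀ hz (by simp)]
          exact ih i₀
        · push_neg at hx
          simp [hx]
      rw [Finsupp.smul_apply, smul_eq_mul, abs_mul]
      have h1 : |((mseq j : ℝ))⁻¹| ≤ 1 := by
        rw [abs_inv, abs_of_nonneg (by positivity)]
        exact inv_le_one_of_one_le₀ (one_le_mseq j)
      calc |(mseq j : ℝ)⁻¹| * |(∑ i, g i) x| ≤ 1 * 1 :=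
            mul_le_mul h1 hsum (abs_nonneg _) zero_le_one
        _ = 1 := by ring

/-- restrict a sum of `|f k|` to the support -/
lemma sum_abs_eq_inter_support (f : ℕ →₀ ℝ) (A : Finset ℕ) :
    ∑ k ∈ A, |f k| = ∑ k ∈ A ∩ f.support, |f k| := by
  refine (Finset.sum_subset Finset.inter_subset_left ?_).symm
  intro x hx hxn
  have hxs : x ∉ f.support := fun hs => hxn (Finset.mem_inter.mpr ⟨hx, hs⟩)
  simp [Finsupp.notMem_support_iff.mp hxs]

lemma sum_abs_le_card {j₀ : ℕ} {f : ℕ →₀ ℝ} (hf : Dset j₀ f) (A : Finset ℕ) :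
    ∑ k ∈ A, |f k| ≤ (A.card : ℝ) := by
  calc ∑ k ∈ A, |f k| ≤ ∑ k ∈ A, 1 := Finset.sum_le_sum fun x _ => hf.abs_le_one x
    _ = (A.card : ℝ) := by simp

lemma card_inter_sum_le {d : ℕ} (g : Fin d → (ℕ →₀ ℝ))
    (hblock : ∀ i i' : Fin d, i < i' → BlockLt (g i) (g i')) (A : Finset ℕ) :
    ∑ i, ((A ∩ (g i).support).card) ≤ A.card := by
  classical
  have hdisj : ∀ i ∈ (Finset.univ : Finset (Fin d)), ∀ i' ∈ Finset.univ, i ≠ i' →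
      Disjoint (A ∩ (g i).support) (A ∩ (g i').support) := by
    intro i _ i' _ hne
    exact (support_disjoint g hblock i i' hne).mono Finset.inter_subset_right
      Finset.inter_subset_right
  calc ∑ i, ((A ∩ (g i).support).card)
      = (Finset.univ.biUnion fun i => A ∩ (g i).support).card :=
        (Finset.card_biUnion hdisj).symm
    _ ≤ A.card := Finset.card_le_card (Finset.biUnion_subset.mpr
        fun i _ => Finset.inter_subset_left)

/-- splitting the sum for an `op` element -/
lemma sum_abs_op_le (j : ℕ) {d : ℕ} (g : Fin d → (ℕ →₀ ℝ)) (A : Finset ℕ) :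
    ∑ k ∈ A, |((mseq j : ℝ)⁻¹ • ∑ i, g i) k|
      ≤ (mseq j : ℝ)⁻¹ * ∑ i, ∑ k ∈ A ∩ (g i).support, |g i k| := by
  have hm : (0:ℝ) ≤ (mseq j : ℝ)⁻¹ := by positivity
  have h1 : ∑ k ∈ A, |((mseq j : ℝ)⁻¹ • ∑ i, g i) k|
      ≤ ∑ k ∈ A, (mseq j : ℝ)⁻¹ * ∑ i, |g i k| := by
    refine Finset.sum_le_sum fun x _ => ?_
    rw [Finsupp.smul_apply, smul_eq_mul, abs_mul, abs_of_nonneg hm,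
      Finsupp.finset_sum_apply]
    exact mul_le_mul_of_nonneg_left (Finset.abs_sum_le_sum_abs _ _) hm
  rw [← Finset.mul_sum] at h1
  refine h1.trans (mul_le_mul_of_nonneg_left ?_ hm)
  rw [Finset.sum_comm]
  refine Finset.sum_le_sum fun i _ => ?_
  rw [← sum_abs_eq_inter_support]

/-- capacity function `Φ t = n' · (5 n')^t` where `n' = nseq (j₀ - 1)`. -/
def s15Phi (j₀ t : ℕ) : ℕ := nseq (j₀ - 1) * (5 * nseq (j₀ - 1)) ^ t

lemma s15Phi_mono (j₀ : ℕ) : Monotone (s15Phi j₀) := by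
  intro a b hab
  exact Nat.mul_le_mul_left _ (Nat.pow_le_pow_right (by have := nseq_pos (j₀ - 1); omega) hab)

lemma nseq_le_s15Phi (j₀ t : ℕ) : nseq (j₀ - 1) ≤ s15Phi j₀ t :=
  Nat.le_mul_of_pos_right _ (pow_pos (by have := nseq_pos (j₀ - 1); omega) _)

lemma aux_bound {j₀ : ℕ} {f : ℕ →₀ ℝ} (hf : Dset j₀ f) :
    ∀ t : ℕ, t + 1 ≤ 5 ^ (j₀ - 1) → ∀ A : Finset ℕ,
      ∑ k ∈ A, |f k| ≤ (s15Phi j₀ t : ℝ)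
        + min (A.card : ℝ) (s15Phi j₀ t : ℝ) / 2 ^ t
        + (A.card : ℝ) / 2 ^ (t + 1) := by
  induction hf with
  | base h hcard hval =>
      intro t ht A
      have h1 : ∑ k ∈ A, |h k| ≤ (nseq (j₀ - 1) : ℝ) := by
        rw [sum_abs_eq_inter_support]
        calc ∑ k ∈ A ∩ h.support, |h k| ≤ ∑ k ∈ A ∩ h.support, 1 := by
              refine Finset.sum_le_sum fun x hx => ?_
              rcases hval x (Finset.mem_inter.mp hx).2 with h' | h' <;> simp [h']
          _ = ((A ∩ h.support).card : ℝ) := by simp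
          _ ≤ (h.support.card : ℝ) := by
              exact_mod_cast Finset.card_le_card Finset.inter_subset_right
          _ ≤ (nseq (j₀ - 1) : ℝ) := by exact_mod_cast hcard
      have h2 : (nseq (j₀ - 1) : ℝ) ≤ (s15Phi j₀ t : ℝ) := by
        exact_mod_cast nseq_le_s15Phi j₀ t
      have h3 : (0:ℝ) ≤ min (A.card : ℝ) (s15Phi j₀ t : ℝ) / 2 ^ t :=
        div_nonneg (le_min (by positivity) (by positivity)) (by positivity)
      have h4 : (0:ℝ) ≤ (A.card : ℝ) / 2 ^ (t + 1) := by positivity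
      linarith
  | op j d hj hd g hmem hblock ih =>
      intro t ht A
      have hm0 : (0:ℝ) ≤ (mseq j : ℝ)⁻¹ := by positivity
      have hsplit := sum_abs_op_le j g A
      have hcardsN := card_inter_sum_le g hblock A
      by_cases hc : 5 ^ (j - 1) ≤ t
      · -- shallow case : the node exponent fits under t
        set ε := 5 ^ (j - 1) with hεdef
        set t' := t - ε with ht'def
        have hε1 : 1 ≤ ε := Nat.one_le_pow _ _ (by norm_num)
        have htt : ε + t' = t := by omega
        have ht' : t' + 1 ≤ 5 ^ (j₀ - 1) := by omega
        have hjp : j ≤ j₀ - 1 := by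
          by_contra hcon
          push_neg at hcon
          have h5 : 5 ^ (j₀ - 1) ≤ 5 ^ (j - 1) := Nat.pow_le_pow_right (by norm_num) (by omega)
          omega
        have hdν : d ≤ 5 * nseq (j₀ - 1) :=
          le_trans hd (Nat.mul_le_mul (le_refl 5) (nseq_mono hjp))
        set c := (s15Phi j₀ t' : ℝ) with hcdef
        set a := (A.card : ℝ) with hadef
        have hc0 : (0:ℝ) ≤ c := by rw [hcdef]; positivity
        have hdcN : d * s15Phi j₀ t' ≤ s15Phi j₀ t := by
          calc d * s15Phi j₀ t' ≤ (5 * nseq (j₀ - 1)) * s15Phi j₀ t' :=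
                Nat.mul_le_mul_right _ hdν
            _ = s15Phi j₀ (t' + 1) := by unfold s15Phi; ring
            _ ≤ s15Phi j₀ t := s15Phi_mono j₀ (by omega)
        have hdc : (d : ℝ) * c ≤ (s15Phi j₀ t : ℝ) := by
          rw [hcdef]; exact_mod_cast hdcN
        have hchild : ∀ i : Fin d,
            ∑ k ∈ A ∩ (g i).support, |g i k| ≤ c
              + min (((A ∩ (g i).support).card : ℝ)) c / 2 ^ t'
              + (((A ∩ (g i).support).card : ℝ)) / 2 ^ (t' + 1) := fun i => ih i t' ht' _
        have hsum2 : ∑ i, ∑ k ∈ A ∩ (g i).support, |g i k|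
            ≤ (d : ℝ) * c + (∑ i, min (((A ∩ (g i).support).card : ℝ)) c) / 2 ^ t'
              + (∑ i, (((A ∩ (g i).support).card : ℝ))) / 2 ^ (t' + 1) := by
          calc ∑ i, ∑ k ∈ A ∩ (g i).support, |g i k|
              ≤ ∑ i, (c + min (((A ∩ (g i).support).card : ℝ)) c / 2 ^ t'
                + (((A ∩ (g i).support).card : ℝ)) / 2 ^ (t' + 1)) :=
                Finset.sum_le_sum fun i _ => hchild i
            _ = _ := by
                rw [Finset.sum_add_distrib, Finset.sum_add_distrib, ← Finset.sum_div,
                  ← Finset.sum_div, Finset.sum_const, Finset.card_univ, Fintype.card_fin,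
                  nsmul_eq_mul]
        have hcards : (∑ i, (((A ∩ (g i).support).card : ℝ))) ≤ a := by
          rw [hadef]; exact_mod_cast hcardsN
        have hmins : (∑ i, min (((A ∩ (g i).support).card : ℝ)) c)
            ≤ min a (s15Phi j₀ t : ℝ) := by
          refine le_min ?_ ?_
          · exact le_trans (Finset.sum_le_sum fun i _ => min_le_left _ _) hcards
          · calc (∑ i, min (((A ∩ (g i).support).card : ℝ)) c)
                ≤ ∑ i, c := Finset.sum_le_sum fun i _ => min_le_right _ _
              _ = (d : ℝ) * c := by
                  rw [Finset.sum_const, Finset.card_univ, Fintype.card_fin, nsmul_eq_mul]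
              _ ≤ _ := hdc
        have hmins0 : (0:ℝ) ≤ ∑ i, min (((A ∩ (g i).support).card : ℝ)) c :=
          Finset.sum_nonneg fun i _ => le_min (by positivity) hc0
        have hcards0 : (0:ℝ) ≤ ∑ i, (((A ∩ (g i).support).card : ℝ)) :=
          Finset.sum_nonneg fun i _ => by positivity
        have hmeq : (mseq j : ℝ) = (2:ℝ) ^ ε := mseq_cast j
        have hminv : (mseq j : ℝ)⁻¹ ≤ 1 := inv_le_one_of_one_le₀ (one_le_mseq j)
        -- combine
        have hfinal : (mseq j : ℝ)⁻¹ * ∑ i, ∑ k ∈ A ∩ (g i).support, |g i k|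
            ≤ (s15Phi j₀ t : ℝ) + min a (s15Phi j₀ t : ℝ) / 2 ^ t + a / 2 ^ (t + 1) := by
          have hstep : (mseq j : ℝ)⁻¹ * ∑ i, ∑ k ∈ A ∩ (g i).support, |g i k|
              ≤ (mseq j : ℝ)⁻¹ * ((d : ℝ) * c)
                + (mseq j : ℝ)⁻¹ * ((∑ i, min (((A ∩ (g i).support).card : ℝ)) c) / 2 ^ t')
                + (mseq j : ℝ)⁻¹ * ((∑ i, (((A ∩ (g i).support).card : ℝ))) / 2 ^ (t' + 1)) := by
            calc (mseq j : ℝ)⁻¹ * ∑ i, ∑ k ∈ A ∩ (g i).support, |g i k|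
                ≤ (mseq j : ℝ)⁻¹ * ((d : ℝ) * c
                  + (∑ i, min (((A ∩ (g i).support).card : ℝ)) c) / 2 ^ t'
                  + (∑ i, (((A ∩ (g i).support).card : ℝ))) / 2 ^ (t' + 1)) :=
                  mul_le_mul_of_nonneg_left hsum2 hm0
              _ = _ := by ring
          have ht1 : (mseq j : ℝ)⁻¹ * ((d : ℝ) * c) ≤ (s15Phi j₀ t : ℝ) := by
            calc (mseq j : ℝ)⁻¹ * ((d : ℝ) * c) ≤ 1 * ((d : ℝ) * c) :=
                  mul_le_mul_of_nonneg_right hminv (by positivity)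
              _ = (d : ℝ) * c := by ring
              _ ≤ _ := hdc
          have ht2 : (mseq j : ℝ)⁻¹ * ((∑ i, min (((A ∩ (g i).support).card : ℝ)) c) / 2 ^ t')
              ≤ min a (s15Phi j₀ t : ℝ) / 2 ^ t := by
            have heq : (mseq j : ℝ)⁻¹ * ((∑ i, min (((A ∩ (g i).support).card : ℝ)) c) / 2 ^ t')
                = (∑ i, min (((A ∩ (g i).support).card : ℝ)) c) / 2 ^ t := by
              rw [hmeq, ← htt, pow_add]
              ring
            rw [heq]
            exact div_le_div_of_nonneg_right hmins (by positivity) |>.trans_eq rfl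
          have ht3 : (mseq j : ℝ)⁻¹ * ((∑ i, (((A ∩ (g i).support).card : ℝ))) / 2 ^ (t' + 1))
              ≤ a / 2 ^ (t + 1) := by
            have heq : (mseq j : ℝ)⁻¹ * ((∑ i, (((A ∩ (g i).support).card : ℝ))) / 2 ^ (t' + 1))
                = (∑ i, (((A ∩ (g i).support).card : ℝ))) / 2 ^ (t + 1) := by
              have h5 : ε + (t' + 1) = t + 1 := by omega
              rw [hmeq, ← h5, pow_add]
              ring
            rw [heq]
            exact div_le_div_of_nonneg_right hcards (by positivity)
          linarith
        exact hsplit.trans hfinal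
      · -- deep case : the node exponent exceeds t
        have hεt : t + 1 ≤ 5 ^ (j - 1) := by omega
        have hS : ∑ i, ∑ k ∈ A ∩ (g i).support, |g i k|
            ≤ ∑ i, (((A ∩ (g i).support).card : ℝ)) :=
          Finset.sum_le_sum fun i _ => sum_abs_le_card (hmem i) _
        have hSa : ∑ i, ∑ k ∈ A ∩ (g i).support, |g i k| ≤ (A.card : ℝ) := by
          refine hS.trans ?_
          exact_mod_cast hcardsN
        have hS0 : (0:ℝ) ≤ ∑ i, ∑ k ∈ A ∩ (g i).support, |g i k| :=
          Finset.sum_nonneg fun i _ => Finset.sum_nonneg fun k _ => abs_nonneg _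
        have hmge : (2:ℝ) ^ (t + 1) ≤ (mseq j : ℝ) := by
          rw [mseq_cast]
          exact pow_le_pow_right₀ (by norm_num) hεt
        have hminv : (mseq j : ℝ)⁻¹ ≤ ((2:ℝ) ^ (t + 1))⁻¹ :=
          inv_anti₀ (by positivity) hmge
        have : (mseq j : ℝ)⁻¹ * ∑ i, ∑ k ∈ A ∩ (g i).support, |g i k|
            ≤ (A.card : ℝ) / 2 ^ (t + 1) := by
          calc (mseq j : ℝ)⁻¹ * ∑ i, ∑ k ∈ A ∩ (g i).support, |g i k|
              ≤ ((2:ℝ) ^ (t + 1))⁻¹ * (A.card : ℝ) := by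
                apply mul_le_mul hminv hSa hS0 (by positivity)
            _ = (A.card : ℝ) / 2 ^ (t + 1) := by ring
        have h3 : (0:ℝ) ≤ min (A.card : ℝ) (s15Phi j₀ t : ℝ) / 2 ^ t :=
          div_nonneg (le_min (by positivity) (by positivity)) (by positivity)
        have h4 : (0:ℝ) ≤ (s15Phi j₀ t : ℝ) := by positivity
        linarith [hsplit]

lemma key_numeric {j₀ : ℕ} (hj₀ : 2 ≤ j₀) :
    2 * mseq j₀ * s15Phi j₀ (5 ^ (j₀ - 1)) ≤ nseq j₀ := by
  obtain ⟨q, rfl⟩ : ∃ q, j₀ = q + 2 := ⟨j₀ - 2, by omega⟩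
  show 2 * 2 ^ 5 ^ (q + 1) * (nseq (q + 1) * (5 * nseq (q + 1)) ^ 5 ^ (q + 1))
      ≤ (5 * nseq (q + 1)) ^ (3 * 5 ^ (q + 1))
  set n := nseq (q + 1) with hn
  have hn1 : 1 ≤ n := nseq_pos (q + 1)
  set ν := 5 * n with hν
  have hν2 : 2 ≤ ν := by omega
  set E := 5 ^ (q + 1) with hE
  have hE5 : 5 ≤ E := by
    calc 5 = 5 ^ 1 := (pow_one 5).symm
      _ ≤ 5 ^ (q + 1) := Nat.pow_le_pow_right (by norm_num) (by omega)
  have h2E : 2 ^ E ≤ ν ^ E := Nat.pow_le_pow_left hν2 E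
  calc 2 * 2 ^ E * (n * ν ^ E) ≤ ν * ν ^ E * (ν * ν ^ E) := by
        refine Nat.mul_le_mul (Nat.mul_le_mul hν2 h2E) (Nat.mul_le_mul (by omega) (le_refl _))
    _ = ν ^ (2 * E + 2) := by ring
    _ ≤ ν ^ (3 * E) := Nat.pow_le_pow_right (by omega) (by omega)

lemma main_bound {j₀ : ℕ} (hj₀ : 2 ≤ j₀) {f : ℕ →₀ ℝ} (hf : Dset j₀ f)
    (A : Finset ℕ) (hA : A.card ≤ nseq j₀) :
    ∑ k ∈ A, |f k| ≤ (nseq j₀ : ℝ) / (mseq j₀ : ℝ) := by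
  have hM0 : (0:ℝ) < (mseq j₀ : ℝ) := by rw [mseq_cast]; positivity
  have hN0 : (0:ℝ) < (nseq j₀ : ℝ) := by exact_mod_cast nseq_pos j₀
  cases hf with
  | base h hcard hval =>
      have h1 : ∑ k ∈ A, |f k| ≤ (nseq (j₀ - 1) : ℝ) := by
        rw [sum_abs_eq_inter_support]
        calc ∑ k ∈ A ∩ f.support, |f k| ≤ ∑ k ∈ A ∩ f.support, 1 := by
              refine Finset.sum_le_sum fun x hx => ?_
              rcases hval x (Finset.mem_inter.mp hx).2 with h' | h' <;> simp [h']
          _ = ((A ∩ f.support).card : ℝ) := by simp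
          _ ≤ (f.support.card : ℝ) := by
              exact_mod_cast Finset.card_le_card Finset.inter_subset_right
          _ ≤ (nseq (j₀ - 1) : ℝ) := by exact_mod_cast hcard
      have h2 : nseq (j₀ - 1) * mseq j₀ ≤ nseq j₀ := by
        calc nseq (j₀ - 1) * mseq j₀ ≤ 2 * mseq j₀ * s15Phi j₀ (5 ^ (j₀ - 1)) := by
              have := nseq_le_s15Phi j₀ (5 ^ (j₀ - 1))
              calc nseq (j₀ - 1) * mseq j₀ ≤ s15Phi j₀ (5 ^ (j₀ - 1)) * mseq j₀ :=
                    Nat.mul_le_mul_right _ this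
                _ ≤ 2 * mseq j₀ * s15Phi j₀ (5 ^ (j₀ - 1)) := by ring_nf; omega
          _ ≤ nseq j₀ := key_numeric hj₀
      refine h1.trans ?_
      rw [le_div_iff₀ hM0]
      exact_mod_cast h2
  | op j d hj hd g hmem hblock =>
      have hsplit := sum_abs_op_le j g A
      have hcardsN := card_inter_sum_le g hblock A
      have hcards : (∑ i, (((A ∩ (g i).support).card : ℝ))) ≤ (A.card : ℝ) := by
        exact_mod_cast hcardsN
      have hAR : (A.card : ℝ) ≤ (nseq j₀ : ℝ) := by exact_mod_cast hA
      rcases le_or_gt j₀ j with hbig | hsmall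
      · -- deep root : trivial pointwise estimate
        have hmm : (mseq j₀ : ℝ) ≤ (mseq j : ℝ) := by
          have : mseq j₀ ≤ mseq j :=
            Nat.pow_le_pow_right (by norm_num) (Nat.pow_le_pow_right (by norm_num) (by omega))
          exact_mod_cast this
        have hS : ∑ i, ∑ k ∈ A ∩ (g i).support, |g i k| ≤ (A.card : ℝ) := by
          refine (Finset.sum_le_sum fun i _ => sum_abs_le_card (hmem i) _).trans hcards
        have hS0 : (0:ℝ) ≤ ∑ i, ∑ k ∈ A ∩ (g i).support, |g i k| :=
          Finset.sum_nonneg fun i _ => Finset.sum_nonneg fun k _ => abs_nonneg _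
        calc ∑ k ∈ A, |((mseq j : ℝ)⁻¹ • ∑ i, g i) k|
            ≤ (mseq j : ℝ)⁻¹ * ∑ i, ∑ k ∈ A ∩ (g i).support, |g i k| := hsplit
          _ ≤ (mseq j₀ : ℝ)⁻¹ * (nseq j₀ : ℝ) := by
              apply mul_le_mul (inv_anti₀ hM0 hmm) (hS.trans hAR) hS0 (by positivity)
          _ = (nseq j₀ : ℝ) / (mseq j₀ : ℝ) := by ring
      · -- shallow root : use the capacity bound on the children
        set E := 5 ^ (j₀ - 1) with hEdef
        set ε := 5 ^ (j - 1) with hεdef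
        have hε1 : 1 ≤ ε := Nat.one_le_pow _ _ (by norm_num)
        have hεE : ε < E := by
          rw [hεdef, hEdef]
          exact Nat.pow_lt_pow_right (by norm_num) (by omega)
        set t' := E - ε with ht'def
        have htt : ε + t' = E := by omega
        have ht'1 : t' + 1 ≤ E := by omega
        have hjp : j ≤ j₀ - 1 := by omega
        have hdν : d ≤ 5 * nseq (j₀ - 1) :=
          le_trans hd (Nat.mul_le_mul (le_refl 5) (nseq_mono hjp))
        set c := (s15Phi j₀ t' : ℝ) with hcdef
        have hc0 : (0:ℝ) ≤ c := by rw [hcdef]; positivity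
        have hchild : ∀ i : Fin d, ∑ k ∈ A ∩ (g i).support, |g i k|
            ≤ 2 * c + ((A ∩ (g i).support).card : ℝ) / 2 ^ (t' + 1) := by
          intro i
          have h1 := aux_bound (hmem i) t' (by omega) (A ∩ (g i).support)
          have h2 : min (((A ∩ (g i).support).card : ℝ)) c / 2 ^ t' ≤ c := by
            calc min (((A ∩ (g i).support).card : ℝ)) c / 2 ^ t'
                ≤ c / 2 ^ t' := div_le_div_of_nonneg_right (min_le_right _ _) (by positivity)
              _ ≤ c := div_le_self hc0 (one_le_pow₀ one_le_two)
          rw [← hcdef] at h1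
          linarith
        have hsum2 : ∑ i, ∑ k ∈ A ∩ (g i).support, |g i k|
            ≤ (d : ℝ) * (2 * c) + (∑ i, (((A ∩ (g i).support).card : ℝ))) / 2 ^ (t' + 1) := by
          calc ∑ i, ∑ k ∈ A ∩ (g i).support, |g i k|
              ≤ ∑ i, (2 * c + ((A ∩ (g i).support).card : ℝ) / 2 ^ (t' + 1)) :=
                Finset.sum_le_sum fun i _ => hchild i
            _ = _ := by
                rw [Finset.sum_add_distrib, ← Finset.sum_div, Finset.sum_const,
                  Finset.card_univ, Fintype.card_fin, nsmul_eq_mul]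
        have hdcE : d * s15Phi j₀ t' ≤ s15Phi j₀ E := by
          calc d * s15Phi j₀ t' ≤ (5 * nseq (j₀ - 1)) * s15Phi j₀ t' :=
                Nat.mul_le_mul_right _ hdν
            _ = s15Phi j₀ (t' + 1) := by unfold s15Phi; ring
            _ ≤ s15Phi j₀ E := s15Phi_mono j₀ (by omega)
        have hdc : (d : ℝ) * c ≤ (s15Phi j₀ E : ℝ) := by
          rw [hcdef]; exact_mod_cast hdcE
        have hm2 : (2:ℝ) ≤ (mseq j : ℝ) := by
          rw [mseq_cast]
          calc (2:ℝ) = 2 ^ 1 := (pow_one 2).symm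
            _ ≤ 2 ^ 5 ^ (j - 1) := pow_le_pow_right₀ one_le_two (by omega)
        have hminv : (mseq j : ℝ)⁻¹ ≤ 2⁻¹ := inv_anti₀ two_pos hm2
        have hm0 : (0:ℝ) ≤ (mseq j : ℝ)⁻¹ := by positivity
        have hmeq : (mseq j : ℝ) = (2:ℝ) ^ ε := mseq_cast j
        have hT1 : (mseq j : ℝ)⁻¹ * ((d : ℝ) * (2 * c)) ≤ (s15Phi j₀ E : ℝ) := by
          calc (mseq j : ℝ)⁻¹ * ((d : ℝ) * (2 * c)) ≤ 2⁻¹ * ((d : ℝ) * (2 * c)) :=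
                mul_le_mul_of_nonneg_right hminv (by positivity)
            _ = (d : ℝ) * c := by ring
            _ ≤ _ := hdc
        have hcards0 : (0:ℝ) ≤ ∑ i, (((A ∩ (g i).support).card : ℝ)) :=
          Finset.sum_nonneg fun i _ => by positivity
        have hT2 : (mseq j : ℝ)⁻¹ * ((∑ i, (((A ∩ (g i).support).card : ℝ))) / 2 ^ (t' + 1))
            ≤ (nseq j₀ : ℝ) / 2 ^ (E + 1) := by
          have heq : (mseq j : ℝ)⁻¹ * ((∑ i, (((A ∩ (g i).support).card : ℝ))) / 2 ^ (t' + 1))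
              = (∑ i, (((A ∩ (g i).support).card : ℝ))) / 2 ^ (E + 1) := by
            have h5 : ε + (t' + 1) = E + 1 := by omega
            rw [hmeq, ← h5, pow_add]
            ring
          rw [heq]
          exact div_le_div_of_nonneg_right (hcards.trans hAR) (by positivity)
        have hkeyR : (s15Phi j₀ E : ℝ) ≤ (nseq j₀ : ℝ) / 2 ^ (E + 1) := by
          rw [le_div_iff₀ (by positivity)]
          have hk := key_numeric hj₀
          have hcast : ((2 * mseq j₀ * s15Phi j₀ (5 ^ (j₀ - 1)) : ℕ) : ℝ)
              = (s15Phi j₀ E : ℝ) * 2 ^ (E + 1) := by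
            push_cast [mseq]
            rw [← hEdef]
            ring
          calc (s15Phi j₀ E : ℝ) * 2 ^ (E + 1)
              = ((2 * mseq j₀ * s15Phi j₀ (5 ^ (j₀ - 1)) : ℕ) : ℝ) := hcast.symm
            _ ≤ (nseq j₀ : ℝ) := by exact_mod_cast hk
        have hMeq : (nseq j₀ : ℝ) / (mseq j₀ : ℝ) = (nseq j₀ : ℝ) / 2 ^ E := by
          rw [mseq_cast, hEdef]
        have hhalf : (nseq j₀ : ℝ) / 2 ^ (E + 1) + (nseq j₀ : ℝ) / 2 ^ (E + 1)
            = (nseq j₀ : ℝ) / 2 ^ E := by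
          rw [pow_succ]
          ring
        calc ∑ k ∈ A, |((mseq j : ℝ)⁻¹ • ∑ i, g i) k|
            ≤ (mseq j : ℝ)⁻¹ * ∑ i, ∑ k ∈ A ∩ (g i).support, |g i k| := hsplit
          _ ≤ (mseq j : ℝ)⁻¹ * ((d : ℝ) * (2 * c)
              + (∑ i, (((A ∩ (g i).support).card : ℝ))) / 2 ^ (t' + 1)) :=
              mul_le_mul_of_nonneg_left hsum2 hm0
          _ = (mseq j : ℝ)⁻¹ * ((d : ℝ) * (2 * c))
              + (mseq j : ℝ)⁻¹ * ((∑ i, (((A ∩ (g i).support).card : ℝ))) / 2 ^ (t' + 1)) := by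
              ring
          _ ≤ (nseq j₀ : ℝ) / 2 ^ (E + 1) + (nseq j₀ : ℝ) / 2 ^ (E + 1) := by
              have := hT1.trans hkeyR
              linarith [hT2]
          _ = (nseq j₀ : ℝ) / 2 ^ E := hhalf
          _ = (nseq j₀ : ℝ) / (mseq j₀ : ℝ) := hMeq.symm

lemma fapply_smul_sum {n : ℕ} (f : ℕ →₀ ℝ) (c : ℝ) (k : Fin n → ℕ) :
    fapply f (c • ∑ l, Finsupp.single (k l) (1 : ℝ)) = c * ∑ l, f (k l) := by
  unfold fapply
  rw [Finsupp.sum_smul_index' (h := fun i v => f i * v) (fun i => mul_zero _)]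
  rw [← Finsupp.sum_finset_sum_index (fun a => by simp) (fun a b₁ b₂ => by
    simp [smul_eq_mul]; ring)]
  rw [Finset.mul_sum]
  refine Finset.sum_congr rfl fun l _ => ?_
  rw [Finsupp.sum_single_index (by simp)]
  simp [smul_eq_mul]
  ring

/-- For every `f ∈ D'` and natural numbers `k 0 < k 1 < ⋯`
(`n_{j₀}` of them), the action of `f` on the average
`(1/n_{j₀}) ∑ l, e_{k l}` is at most `1/m_{j₀}` in absolute value. -/
theorem statement15 (j₀ : ℕ) (hj₀ : 2 ≤ j₀) (f : ℕ →₀ ℝ) (hf : Dset j₀ f)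
    (k : Fin (nseq j₀) → ℕ) (hk : StrictMono k) :
    |fapply f ((nseq j₀ : ℝ)⁻¹ • ∑ l, Finsupp.single (k l) (1 : ℝ))|
      ≤ 1 / (mseq j₀ : ℝ) := by
  have hinj : Function.Injective k := hk.injective
  have hM0 : (0:ℝ) < (mseq j₀ : ℝ) := by rw [mseq_cast]; positivity
  have hN0 : (0:ℝ) < (nseq j₀ : ℝ) := by exact_mod_cast nseq_pos j₀
  rw [fapply_smul_sum]
  set K : Finset ℕ := Finset.image k Finset.univ with hK
  have hcard : K.card = nseq j₀ := by
    rw [hK, Finset.card_image_of_injective _ hinj, Finset.card_univ, Fintype.card_fin]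
  have hmain := main_bound hj₀ hf K (le_of_eq hcard)
  have hsum : |∑ l, f (k l)| ≤ ∑ k' ∈ K, |f k'| := by
    rw [hK, Finset.sum_image (fun x _ y _ h => hinj h)]
    exact Finset.abs_sum_le_sum_abs _ _
  rw [abs_mul, abs_inv, abs_of_nonneg hN0.le]
  calc (nseq j₀ : ℝ)⁻¹ * |∑ l, f (k l)|
      ≤ (nseq j₀ : ℝ)⁻¹ * ((nseq j₀ : ℝ) / (mseq j₀ : ℝ)) :=
        mul_le_mul_of_nonneg_left (hsum.trans hmain) (by positivity)
    _ = 1 / (mseq j₀ : ℝ) := by field_simp
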